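/- Every hedonic diversity game admits an individually stable outcome. Concretely: let C₀ consist of min(|B*|,|R*|) agents from B* = {b ∈ B : b weakly prefers ratio 1/2 to ratio 0} and equally many from R* = {r ∈ R : r weakly prefers ratio 1/2 to ratio 1}; then greedily add agents with IS-deviations to C₀ until no agent outside has an IS-deviation to it, obtaining C₁. The partition consisting of C₁ together with singletons for all other agents is individually stable. -/

import Mathlib

namespace S6

/-- The fraction of red agents in a coalition. -/
def ratio {n : ℕ} (red C : Finset (Fin n)) : ℚ := ((C ∩ red).card : ℚ) / (C.card : ℚ)

/-- `P` is a partition of the agent set into nonempty coalitions. -/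
def IsPartition {n : ℕ} (P : Finset (Finset (Fin n))) : Prop :=
  (∀ C ∈ P, C.Nonempty) ∧ ∀ i : Fin n, ∃! C, C ∈ P ∧ i ∈ C

/-- No agent `i` has an IS-deviation: a coalition `C ∈ P ∪ {∅}` such that `i`
strictly prefers the ratio of `C ∪ {i}` to that of her own coalition and every
member of `C` weakly prefers the ratio of `C ∪ {i}` to that of `C`. -/
def IndividuallyStable {n : ℕ} (red : Finset (Fin n)) (pref : Fin n → ℚ → ℚ → Prop)
    (P : Finset (Finset (Fin n))) : Prop :=
  ¬ ∃ (i : Fin n) (A C : Finset (Fin n)),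
      A ∈ P ∧ i ∈ A ∧ (C ∈ P ∨ C = ∅) ∧ i ∉ C ∧
      pref i (ratio red (insert i C)) (ratio red A) ∧
      ¬ pref i (ratio red A) (ratio red (insert i C)) ∧
      ∀ j ∈ C, pref j (ratio red (insert i C)) (ratio red C)

variable {n : ℕ}


lemma ratio_singleton (red : Finset (Fin n)) (i : Fin n) :
    ratio red {i} = if i ∈ red then 1 else 0 := by
  unfold ratio
  by_cases h : i ∈ red <;>
    simp [Finset.singleton_inter_of_mem, Finset.singleton_inter_of_notMem, h]

lemma ratio_pair (red : Finset (Fin n)) {i j : Fin n} (hij : i ≠ j) :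
    ratio red {i, j} =
      ((if i ∈ red then 1 else 0) + (if j ∈ red then 1 else 0) : ℚ) / 2 := by
  have hcard : ({i, j} : Finset (Fin n)).card = 2 := by
    rw [Finset.card_insert_of_notMem (by simp [hij])]; simp
  have hint : ({i, j} : Finset (Fin n)) ∩ red = ({i} ∩ red) ∪ ({j} ∩ red) := by
    rw [Finset.insert_eq, Finset.union_inter_distrib_right]
  have hdisj : Disjoint ({i} ∩ red) ({j} ∩ red) := by
    apply Finset.disjoint_left.2
    intro a ha hb
    simp only [Finset.mem_inter, Finset.mem_singleton] at ha hb
    exact hij (ha.1 ▸ hb.1 ▸ rfl)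
  unfold ratio
  rw [hcard, hint, Finset.card_union_of_disjoint hdisj]
  by_cases hi : i ∈ red <;> by_cases hj : j ∈ red <;>
    simp [Finset.singleton_inter_of_mem, Finset.singleton_inter_of_notMem, hi, hj] <;> norm_num

lemma ratio_pair_same (red : Finset (Fin n)) {i j : Fin n} (hij : i ≠ j)
    (h : i ∈ red ↔ j ∈ red) : ratio red {i, j} = ratio red {i} := by
  rw [ratio_pair red hij, ratio_singleton]
  by_cases hi : i ∈ red
  · simp [hi, h.1 hi]
  · have hj : j ∉ red := fun hj => hi (h.2 hj)
    simp [hi, hj]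

lemma ratio_pair_diff (red : Finset (Fin n)) {i j : Fin n} (hij : i ≠ j)
    (h : ¬ (i ∈ red ↔ j ∈ red)) : ratio red {i, j} = 1/2 := by
  rw [ratio_pair red hij]
  by_cases hi : i ∈ red <;> by_cases hj : j ∈ red <;>
    simp [hi, hj] at h ⊢ <;> norm_num

lemma greedy (red : Finset (Fin n)) (pref : Fin n → ℚ → ℚ → Prop)
    (htr : ∀ i, IsTrans ℚ (pref i)) (C0 : Finset (Fin n)) :
    ∀ (k : ℕ) (C : Finset (Fin n)), (Finset.univ \ C).card ≤ k → C0 ⊆ C →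
      (∀ i ∈ C, pref i (ratio red C) (ratio red {i})) →
      (∀ i ∈ C0, pref i (ratio red C) (1/2)) →
      ∃ D : Finset (Fin n), C0 ⊆ D ∧
        (∀ i ∈ D, pref i (ratio red D) (ratio red {i})) ∧
        (∀ i ∈ C0, pref i (ratio red D) (1/2)) ∧
        (∀ i, i ∉ D → ¬ (pref i (ratio red (insert i D)) (ratio red {i}) ∧
            ¬ pref i (ratio red {i}) (ratio red (insert i D)) ∧
            ∀ j ∈ D, pref j (ratio red (insert i D)) (ratio red D))) := by
  intro k
  induction k with
  | zero =>
    intro C hcard hC0 hI2 hI3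
    refine ⟨C, hC0, hI2, hI3, fun i hi _ => hi ?_⟩
    have : (Finset.univ \ C) = ∅ := Finset.card_eq_zero.1 (Nat.le_zero.1 hcard)
    by_contra hiC
    exact absurd (Finset.mem_sdiff.2 ⟨Finset.mem_univ i, hiC⟩) (by simp [this])
  | succ k ih =>
    intro C hcard hC0 hI2 hI3
    by_cases hdev : ∃ i, i ∉ C ∧ pref i (ratio red (insert i C)) (ratio red {i}) ∧
        ¬ pref i (ratio red {i}) (ratio red (insert i C)) ∧
        ∀ j ∈ C, pref j (ratio red (insert i C)) (ratio red C)
    · obtain ⟨i, hiC, h1, _h2, h3⟩ := hdev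
      have hsub : Finset.univ \ insert i C ⊂ Finset.univ \ C := by
        refine Finset.ssubset_iff_subset_ne.2 ⟨Finset.sdiff_subset_sdiff le_rfl
          (Finset.subset_insert i C), fun h => ?_⟩
        have hi1 : i ∈ Finset.univ \ C := Finset.mem_sdiff.2 ⟨Finset.mem_univ i, hiC⟩
        rw [← h] at hi1
        simp at hi1
      have hcard' : (Finset.univ \ insert i C).card ≤ k := by
        have := Finset.card_lt_card hsub
        omega
      refine ih (insert i C) hcard' (hC0.trans (Finset.subset_insert i C)) ?_ ?_
      · intro j hj
        rcases Finset.mem_insert.1 hj with rfl | hj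
        · exact h1
        · exact (htr j).trans _ _ _ (h3 j hj) (hI2 j hj)
      · intro j hj
        exact (htr j).trans _ _ _ (h3 j (hC0 hj)) (hI3 j hj)
    · exact ⟨C, hC0, hI2, hI3, fun i hi hd => hdev ⟨i, hi, hd⟩⟩

/-- Every hedonic diversity game (agents' preferences over coalitions induced
by weak orders over the fraction of red agents) admits an individually stable
outcome. -/
theorem stmt6 (n : ℕ) (red : Finset (Fin n)) (pref : Fin n → ℚ → ℚ → Prop)
    (htot : ∀ i, IsTotal ℚ (pref i)) (htr : ∀ i, IsTrans ℚ (pref i)) :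
    ∃ P : Finset (Finset (Fin n)), IsPartition P ∧ IndividuallyStable red pref P := by
  classical
  have hrefl : ∀ i r, pref i r r := fun i r => ((htot i).total r r).elim id id
  set Bstar : Finset (Fin n) := Finset.univ.filter (fun b => b ∉ red ∧ pref b (1/2) 0)
    with hBdef
  set Rstar : Finset (Fin n) := Finset.univ.filter (fun r => r ∈ red ∧ pref r (1/2) 1)
    with hRdef
  have hBmem : ∀ b, b ∈ Bstar ↔ (b ∉ red ∧ pref b (1/2) 0) := by
    intro b; simp [hBdef]
  have hRmem : ∀ r, r ∈ Rstar ↔ (r ∈ red ∧ pref r (1/2) 1) := by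
    intro r; simp [hRdef]
  suffices h : ∀ Bp Rp : Finset (Fin n), Bp ⊆ Bstar → Rp ⊆ Rstar → Bp.card = Rp.card →
      (Bstar ⊆ Bp ∪ Rp ∨ Rstar ⊆ Bp ∪ Rp) →
      ∃ P, IsPartition P ∧ IndividuallyStable red pref P by
    rcases le_total Bstar.card Rstar.card with hle | hle
    · obtain ⟨Rp, hRp, hc⟩ := Finset.exists_subset_card_eq hle
      exact h Bstar Rp subset_rfl hRp hc.symm (Or.inl Finset.subset_union_left)
    · obtain ⟨Bp, hBp, hc⟩ := Finset.exists_subset_card_eq hle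
      exact h Bp Rstar hBp subset_rfl hc (Or.inr Finset.subset_union_right)
  intro Bp Rp hBpB hRpR hcard hstar
  set C0 := Bp ∪ Rp with hC0def
  have hBpred : ∀ b ∈ Bp, b ∉ red := fun b hb => ((hBmem b).1 (hBpB hb)).1
  have hRpred : ∀ r ∈ Rp, r ∈ red := fun r hr => ((hRmem r).1 (hRpR hr)).1
  have hinter : C0 ∩ red = Rp := by
    ext x
    simp only [hC0def, Finset.mem_inter, Finset.mem_union]
    constructor
    · rintro ⟨hx | hx, hxr⟩
      · exact absurd hxr (hBpred x hx)
      · exact hx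
    · intro hx; exact ⟨Or.inr hx, hRpred x hx⟩
  have hdisj : Disjoint Bp Rp :=
    Finset.disjoint_left.2 fun a ha hb => (hBpred a ha) (hRpred a hb)
  have hratioC0 : C0.Nonempty → ratio red C0 = 1/2 := by
    intro hne
    have h2 : C0.card = 2 * Rp.card := by
      rw [hC0def, Finset.card_union_of_disjoint hdisj, hcard]; ring
    have hc0pos := Finset.card_pos.2 hne
    have hRpos : 0 < Rp.card := by omega
    have hRne : (Rp.card : ℚ) ≠ 0 := by exact_mod_cast hRpos.ne'
    unfold ratio
    rw [hinter, h2]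
    push_cast
    field_simp
  have hbase2 : ∀ i ∈ C0, pref i (ratio red C0) (ratio red {i}) := by
    intro i hi
    rw [hratioC0 ⟨i, hi⟩, ratio_singleton]
    rcases Finset.mem_union.1 hi with hb | hr
    · rw [if_neg (hBpred i hb)]; exact ((hBmem i).1 (hBpB hb)).2
    · rw [if_pos (hRpred i hr)]; exact ((hRmem i).1 (hRpR hr)).2
  have hbase3 : ∀ i ∈ C0, pref i (ratio red C0) (1/2) := by
    intro i hi; rw [hratioC0 ⟨i, hi⟩]; exact hrefl i _
  obtain ⟨D, hC0D, hI2, hI3, hnodev⟩ :=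
    greedy red pref htr C0 (Finset.univ \ C0).card C0 le_rfl subset_rfl hbase2 hbase3
  set P : Finset (Finset (Fin n)) :=
    (Finset.univ \ D).image (fun i => ({i} : Finset (Fin n))) ∪ D.image (fun _ => D)
    with hPdef
  have hmemP : ∀ X, X ∈ P ↔ (∃ j, j ∉ D ∧ X = {j}) ∨ (D.Nonempty ∧ X = D) := by
    intro X
    simp only [hPdef, Finset.mem_union, Finset.mem_image, Finset.mem_sdiff, Finset.mem_univ,
      true_and]
    constructor
    · rintro (⟨j, hj, rfl⟩ | ⟨a, ha, rfl⟩)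
      · exact Or.inl ⟨j, hj, rfl⟩
      · exact Or.inr ⟨⟨a, ha⟩, rfl⟩
    · rintro (⟨j, hj, rfl⟩ | ⟨⟨a, ha⟩, rfl⟩)
      · exact Or.inl ⟨j, hj, rfl⟩
      · exact Or.inr ⟨a, ha, rfl⟩
  refine ⟨P, ⟨?_, ?_⟩, ?_⟩
  · intro X hX
    rcases (hmemP X).1 hX with ⟨j, _, rfl⟩ | ⟨hne, rfl⟩
    · exact Finset.singleton_nonempty j
    · exact hne
  · intro i
    by_cases hi : i ∈ D
    · refine ⟨D, ⟨(hmemP D).2 (Or.inr ⟨⟨i, hi⟩, rfl⟩), hi⟩, ?_⟩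
      rintro Y ⟨hY, hiY⟩
      rcases (hmemP Y).1 hY with ⟨j, hj, rfl⟩ | ⟨-, rfl⟩
      · exact absurd ((Finset.mem_singleton.1 hiY) ▸ hi) hj
      · rfl
    · refine ⟨{i}, ⟨(hmemP {i}).2 (Or.inl ⟨i, hi, rfl⟩), Finset.mem_singleton_self i⟩, ?_⟩
      rintro Y ⟨hY, hiY⟩
      rcases (hmemP Y).1 hY with ⟨j, hj, rfl⟩ | ⟨-, rfl⟩
      · rw [show j = i from (Finset.mem_singleton.1 hiY).symm]
      · exact absurd hiY hi
  · rintro ⟨i, A, C, hA, hiA, hC, hiC, h1, h2, h3⟩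
    have hAcase : (A = {i} ∧ i ∉ D) ∨ (A = D ∧ i ∈ D) := by
      rcases (hmemP A).1 hA with ⟨j, hj, rfl⟩ | ⟨-, rfl⟩
      · have hij : i = j := Finset.mem_singleton.1 hiA
        subst hij; exact Or.inl ⟨rfl, hj⟩
      · exact Or.inr ⟨rfl, hiA⟩
    rcases hC with hC | rfl
    · rcases (hmemP C).1 hC with ⟨j, hjD, rfl⟩ | ⟨hDne, rfl⟩
      · -- C = {j}
        have hij : i ≠ j := fun h => hiC (h ▸ Finset.mem_singleton_self j)
        have hins : insert i ({j} : Finset (Fin n)) = {i, j} := rfl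
        by_cases hcol : (i ∈ red ↔ j ∈ red)
        · rw [hins, ratio_pair_same red hij hcol] at h1 h2
          rcases hAcase with ⟨rfl, hiD⟩ | ⟨rfl, hiD⟩
          · exact h2 (hrefl i _)
          · exact h2 (hI2 i hiD)
        · rw [hins, ratio_pair_diff red hij hcol] at h1 h2
          have hjw : pref j (1/2) (ratio red {j}) := by
            have := h3 j (Finset.mem_singleton_self j)
            rwa [hins, ratio_pair_diff red hij hcol] at this
          by_cases hired : i ∈ red
          · have hjred : j ∉ red := fun hjr => hcol ⟨fun _ => hjr, fun _ => hired⟩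
            have hjB : j ∈ Bstar :=
              (hBmem j).2 ⟨hjred, by rwa [ratio_singleton, if_neg hjred] at hjw⟩
            have hRsub : Rstar ⊆ C0 := by
              rcases hstar with hs | hs
              · exact absurd (hC0D (hs hjB)) hjD
              · exact hs
            rcases hAcase with ⟨rfl, hiD⟩ | ⟨rfl, hiD⟩
            · have hiR : i ∈ Rstar :=
                (hRmem i).2 ⟨hired, by rwa [ratio_singleton, if_pos hired] at h1⟩
              exact hiD (hC0D (hRsub hiR))
            · have hiw : pref i (ratio red A) 1 := by
                have := hI2 i hiD
                rwa [ratio_singleton, if_pos hired] at this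
              have hiR : i ∈ Rstar := (hRmem i).2 ⟨hired, (htr i).trans _ _ _ h1 hiw⟩
              exact h2 (hI3 i (hRsub hiR))
          · have hjred : j ∈ red := by
              by_contra hjr
              exact hcol ⟨fun h => absurd h hired, fun h => absurd h hjr⟩
            have hjR : j ∈ Rstar :=
              (hRmem j).2 ⟨hjred, by rwa [ratio_singleton, if_pos hjred] at hjw⟩
            have hBsub : Bstar ⊆ C0 := by
              rcases hstar with hs | hs
              · exact hs
              · exact absurd (hC0D (hs hjR)) hjD
            rcases hAcase with ⟨rfl, hiD⟩ | ⟨rfl, hiD⟩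
            · have hiB : i ∈ Bstar :=
                (hBmem i).2 ⟨hired, by rwa [ratio_singleton, if_neg hired] at h1⟩
              exact hiD (hC0D (hBsub hiB))
            · have hiw : pref i (ratio red A) 0 := by
                have := hI2 i hiD
                rwa [ratio_singleton, if_neg hired] at this
              have hiB : i ∈ Bstar := (hBmem i).2 ⟨hired, (htr i).trans _ _ _ h1 hiw⟩
              exact h2 (hI3 i (hBsub hiB))
      · -- C = D
        rcases hAcase with ⟨rfl, hiD⟩ | ⟨rfl, hiD⟩
        · exact hnodev i hiC ⟨h1, h2, h3⟩
        · exact hiC hiD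
    · -- C = ∅
      have hins : insert i (∅ : Finset (Fin n)) = {i} := by simp
      rw [hins] at h1 h2
      rcases hAcase with ⟨rfl, hiD⟩ | ⟨rfl, hiD⟩
      · exact h2 (hrefl i _)
      · exact h2 (hI2 i hiD)


end S6
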